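/- If an ultrafilter x containing L_n (n ≥ 2) is not irreducible, then there exist i, j < n with i + j = n and ultrafilters x_i ⊇ {L_i}, x_j ⊇ {L_j} (i.e., L_i ∈ x_i and L_j ∈ x_j) such that x = x_i · x_j. -/

import Mathlib

/-- `L n` : positive naturals with exactly `n` prime factors counted with multiplicity. -/
def L (n : ℕ) : Set ℕ+ := {m : ℕ+ | (m : ℕ).primeFactorsList.length = n}

/-- Product of ultrafilters on `ℕ+`: `A ∈ umul x y ↔ {n | {m | n*m ∈ A} ∈ y} ∈ x`. -/
def umul (x y : Ultrafilter ℕ+) : Ultrafilter ℕ+ :=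
  x.bind fun n => y.map fun m => n * m

/-- tilde-divisibility. -/
def tdvd (u v : Ultrafilter ℕ+) : Prop :=
  ∀ A ∈ u, {m : ℕ+ | ∃ a ∈ A, a ∣ m} ∈ v

/-- irreducible ultrafilter. -/
def Irred (p : Ultrafilter ℕ+) : Prop :=
  p ≠ pure 1 ∧ ∀ x y : Ultrafilter ℕ+, p = umul x y → x = pure 1 ∨ y = pure 1

lemma Omega_mul (a b : ℕ+) :
    ((a * b : ℕ+) : ℕ).primeFactorsList.length
      = (a : ℕ).primeFactorsList.length + (b : ℕ).primeFactorsList.length := by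
  have h := Nat.perm_primeFactorsList_mul (a := (a : ℕ)) (b := (b : ℕ)) a.ne_zero b.ne_zero
  simpa [PNat.mul_coe] using h.length_eq

lemma eq_pure_one_of_L_zero (y : Ultrafilter ℕ+) (h : L 0 ∈ y) : y = pure 1 := by
  have hsub : L 0 ⊆ {(1 : ℕ+)} := by
    intro m hm
    have : (m : ℕ).primeFactorsList.length = 0 := hm
    have hm1 : (m : ℕ) = 1 := by
      have hp := Nat.prod_primeFactorsList m.ne_zero
      rw [List.length_eq_zero_iff.mp this] at hp
      simpa using hp.symm
    exact Set.mem_singleton_iff.mpr (PNat.coe_injective (by simpa using hm1))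
  have h1 : {(1 : ℕ+)} ∈ y := y.toFilter.mem_of_superset h hsub
  obtain ⟨a, ha, hy⟩ := Ultrafilter.eq_pure_of_finite_mem (Set.finite_singleton 1) h1
  rw [hy, Set.mem_singleton_iff.mp ha]

theorem stmt_8 (n : ℕ) (hn : 2 ≤ n) (x : Ultrafilter ℕ+) (hx : L n ∈ x)
    (hirr : ¬ Irred x) :
    ∃ i j : ℕ, i < n ∧ j < n ∧ i + j = n ∧
      ∃ xi xj : Ultrafilter ℕ+, L i ∈ xi ∧ L j ∈ xj ∧ x = umul xi xj := by
  rw [Irred, not_and_or] at hirr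
  rcases hirr with h1 | h2
  · -- x = pure 1, contradiction
    push_neg at h1
    rw [h1] at hx
    have : ((1 : ℕ+) : ℕ).primeFactorsList.length = n := hx
    simp [Nat.primeFactorsList_one] at this
    omega
  · push_neg at h2
    obtain ⟨y, z, hxyz, hy1, hz1⟩ := h2
    -- L n ∈ umul y z
    have hmem : {a : ℕ+ | {b : ℕ+ | a * b ∈ L n} ∈ z} ∈ y := by
      rw [hxyz] at hx
      exact hx
    -- For a in that set, Ω a ≤ n and L (n - Ω a) ∈ z
    set Ω : ℕ+ → ℕ := fun m => ((m : ℕ)).primeFactorsList.length with hΩ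
    have key : ∀ a : ℕ+, {b : ℕ+ | a * b ∈ L n} ∈ z →
        Ω a ≤ n ∧ L (n - Ω a) ∈ z := by
      intro a ha
      have heq : {b : ℕ+ | a * b ∈ L n} = {b : ℕ+ | Ω a + Ω b = n} := by
        ext b; simp only [Set.mem_setOf_eq, L, Omega_mul]
        exact Iff.rfl
      rw [heq] at ha
      by_cases hle : Ω a ≤ n
      · refine ⟨hle, ?_⟩
        have : {b : ℕ+ | Ω a + Ω b = n} ⊆ L (n - Ω a) := by
          intro b hb; simp only [Set.mem_setOf_eq] at hb
          show Ω b = n - Ω a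
          omega
        exact z.toFilter.mem_of_superset ha this
      · exfalso
        have : {b : ℕ+ | Ω a + Ω b = n} = ∅ := by
          ext b; simp only [Set.mem_setOf_eq, Set.mem_empty_iff_false, iff_false]
          omega
        rw [this] at ha
        exact z.toFilter.empty_notMem ha
    -- the set is nonempty in y; pick a
    obtain ⟨a, ha⟩ := Ultrafilter.nonempty_of_mem hmem
    obtain ⟨hale, haz⟩ := key a ha
    set i := Ω a with hi
    -- all a' in the set have Ω a' = i
    have hLy : L i ∈ y := by
      have : {a' : ℕ+ | {b : ℕ+ | a' * b ∈ L n} ∈ z} ⊆ L i := by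
        intro a' ha'
        obtain ⟨ha'le, ha'z⟩ := key a' ha'
        show Ω a' = i
        by_contra hne
        have hdisj : L (n - Ω a') ∩ L (n - i) = ∅ := by
          ext b; simp only [Set.mem_inter_iff, Set.mem_empty_iff_false, iff_false, not_and]
          intro hb1 hb2
          have : Ω b = n - Ω a' := hb1
          have : Ω b = n - i := hb2
          omega
        have := Filter.inter_mem (ha'z : L _ ∈ (z : Filter ℕ+)) haz
        rw [hdisj] at this
        exact z.toFilter.empty_notMem this
      exact y.toFilter.mem_of_superset hmem this
    have hine : i ≠ 0 := by
      intro h0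
      exact hy1 (eq_pure_one_of_L_zero y (h0 ▸ hLy))
    have hjne : n - i ≠ 0 := by
      intro h0
      exact hz1 (eq_pure_one_of_L_zero z (h0 ▸ haz))
    exact ⟨i, n - i, by omega, by omega, by omega, y, z, hLy, haz, hxyz⟩
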